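/- For every finite set P ⊆ ℝ² of n ≥ 1 points, there exists a finite set W ⊆ ℝ² with |W| ≤ n − 1 such that the witness Gabriel graph GG⁻(P,W) has no edges, i.e., no two distinct points of P are adjacent. -/

import Mathlib

open scoped RealInnerProductSpace

noncomputable section

/-- The Euclidean plane. -/
abbrev Pt := EuclideanSpace ℝ (Fin 2)

/-- The closed disk with diameter `ab`. -/
def diskD (a b : Pt) : Set Pt := Metric.closedBall (midpoint ℝ a b) (dist a b / 2)

/-- `a` and `b` are adjacent in the witness Gabriel graph with witness set `W`. -/
def gabrielEdge (W : Set Pt) (a b : Pt) : Prop := (diskD a b \ {a, b}) ∩ W = ∅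

/-- General position: no three points collinear, no four points concyclic. -/
def GenPos (S : Set Pt) : Prop :=
  (∀ a ∈ S, ∀ b ∈ S, ∀ c ∈ S, a ≠ b → a ≠ c → b ≠ c → ¬ Collinear ℝ ({a, b, c} : Set Pt)) ∧
  (∀ a ∈ S, ∀ b ∈ S, ∀ c ∈ S, ∀ d ∈ S, a ≠ b → a ≠ c → a ≠ d → b ≠ c → b ≠ d → c ≠ d →
    ¬ EuclideanGeometry.Cospherical ({a, b, c, d} : Set Pt))

/-- Planar determinant `u₁v₂ − u₂v₁`. -/
def det2 (u v : Pt) : ℝ := u 0 * v 1 - u 1 * v 0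

/-- Counterclockwise convex position. -/
def CCWConvexPos {m : ℕ} (q : Fin m → Pt) : Prop :=
  ∀ i j k : Fin m, i < j → j < k → 0 < det2 (q j - q i) (q k - q i)

/-- Cyclic successor in `Fin m`. -/
def cyclicSucc {m : ℕ} (hm : 0 < m) (i : Fin m) : Fin m :=
  ⟨((i : ℕ) + 1) % m, Nat.mod_lt _ hm⟩

lemma mem_diskD_iff (a b w : Pt) : w ∈ diskD a b ↔ ⟪w - a, w - b⟫ ≤ 0 := by
  have h1 : w - midpoint ℝ a b = (2⁻¹:ℝ) • ((w-a)+(w-b)) := by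
    rw [midpoint_eq_smul_add, invOf_eq_inv]; module
  have h2 : a - b = (w-b)-(w-a) := by abel
  rw [diskD, Metric.mem_closedBall, dist_eq_norm, dist_eq_norm, h1, h2, norm_smul]
  have h3 : ‖(2⁻¹:ℝ)‖ = 2⁻¹ := by norm_num [Real.norm_eq_abs]
  rw [h3]
  set u := w - a
  set v := w - b
  constructor
  · intro h
    have h' : ‖u+v‖ ≤ ‖v-u‖ := by linarith
    nlinarith [norm_add_sq_real u v, norm_sub_sq_real v u, real_inner_comm u v,
      mul_self_le_mul_self (norm_nonneg (u+v)) h']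
  · intro h
    by_contra hcon
    push_neg at hcon
    have h' : ‖v-u‖ < ‖u+v‖ := by linarith
    nlinarith [norm_add_sq_real u v, norm_sub_sq_real v u, real_inner_comm u v,
      mul_self_lt_mul_self (norm_nonneg (v-u)) h']

lemma notEdge_of_witness {W : Set Pt} {a b w : Pt} (hw : w ∈ W) (hm : w ∈ diskD a b)
    (ha : w ≠ a) (hb : w ≠ b) : ¬ gabrielEdge W a b := by
  intro h
  have : w ∈ (diskD a b \ {a, b}) ∩ W := ⟨⟨hm, by simp [ha, hb]⟩, hw⟩
  rw [h] at this
  exact this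

lemma notEdge_mono {W W' : Set Pt} (h : W ⊆ W') {a b : Pt} (hn : ¬ gabrielEdge W a b) :
    ¬ gabrielEdge W' a b := by
  intro he
  apply hn
  rw [gabrielEdge, Set.eq_empty_iff_forall_notMem] at he ⊢
  intro x hx
  exact he x ⟨hx.1, h hx.2⟩

lemma gabrielEdge_comm {W : Set Pt} {a b : Pt} : gabrielEdge W a b ↔ gabrielEdge W b a := by
  unfold gabrielEdge diskD
  rw [midpoint_comm, dist_comm, Set.pair_comm]

lemma exists_extreme_witness (P : Finset Pt) (hP : P.Nonempty) :
    ∃ p ∈ P, ∃ w : Pt, ∀ b ∈ P, b ≠ p → (w ∈ diskD p b ∧ w ≠ p ∧ w ≠ b) := by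
  classical
  set T : Finset ℝ := (P ×ˢ P).image (fun q => (q.2 0 - q.1 0) / (q.1 1 - q.2 1)) with hT
  obtain ⟨t, ht⟩ := Infinite.exists_notMem_finset T
  set f : Pt → ℝ := fun x => x 0 + t * x 1 with hf
  have hinj : ∀ a ∈ P, ∀ b ∈ P, f a = f b → a = b := by
    intro a ha b hb h
    by_contra hne
    by_cases h1 : a 1 = b 1
    · have h0 : a 0 = b 0 := by
        simp only [hf] at h
        have ht1 : t * a 1 = t * b 1 := by rw [h1]
        linarith
      apply hne
      ext i
      fin_cases i
      · exact h0
      · exact h1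
    · have hteq : t = (b 0 - a 0) / (a 1 - b 1) := by
        field_simp [sub_ne_zero.mpr h1]
        simp only [hf] at h
        linarith
      apply ht
      rw [hT]
      exact Finset.mem_image.mpr ⟨(a, b), Finset.mk_mem_product ha hb, hteq.symm⟩
  obtain ⟨p, hpP, hpmin⟩ := P.exists_min_image f hP
  refine ⟨p, hpP, ?_⟩
  by_cases hE : (P.erase p).Nonempty
  · obtain ⟨q, hq, hqmin⟩ := (P.erase p).exists_min_image (fun b => f b - f p) hE
    have hstrict : ∀ b ∈ P, b ≠ p → f p < f b := by
      intro b hb hbne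
      refine lt_of_le_of_ne (hpmin b hb) ?_
      intro h
      exact hbne (hinj b hb p hpP h.symm)
    set c : ℝ := f q - f p with hc
    have hcpos : 0 < c := by
      have := hstrict q (Finset.mem_of_mem_erase hq) (Finset.ne_of_mem_erase hq)
      simp [hc]; linarith
    set ε : ℝ := c / (2 * (1 + t ^ 2)) with hε
    have hden : (0:ℝ) < 1 + t ^ 2 := by positivity
    have hεpos : 0 < ε := by positivity
    have hε2 : ε * (1 + t ^ 2) = c / 2 := by
      rw [hε]; field_simp
    set w : Pt := (WithLp.equiv 2 (Fin 2 → ℝ)).symm ![p 0 + ε, p 1 + ε * t] with hwdef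
    have hw0 : w 0 = p 0 + ε := by simp [hwdef]
    have hw1 : w 1 = p 1 + ε * t := by simp [hwdef]
    refine ⟨w, ?_⟩
    intro b hb hbne
    have hfb : c ≤ f b - f p := hqmin b (Finset.mem_erase.mpr ⟨hbne, hb⟩)
    have hinner : ⟪w - p, w - b⟫ = (w 0 - p 0) * (w 0 - b 0) + (w 1 - p 1) * (w 1 - b 1) := by
      simp [PiLp.inner_apply, Fin.sum_univ_two, RCLike.inner_apply, conj_trivial]; ring
    have hlt : ⟪w - p, w - b⟫ < 0 := by
      rw [hinner, hw0, hw1]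
      have hfb' : c ≤ (b 0 + t * b 1) - (p 0 + t * p 1) := hfb
      nlinarith [hεpos, hcpos, hε2, mul_le_mul_of_nonneg_left hfb' (le_of_lt hεpos)]
    refine ⟨(mem_diskD_iff p b w).mpr (le_of_lt hlt), ?_, ?_⟩
    · intro h
      have : w 0 = p 0 := by rw [h]
      rw [hw0] at this
      linarith
    · intro h
      rw [h] at hlt
      simp at hlt
  · refine ⟨p, ?_⟩
    intro b hb hbne
    exact absurd (Finset.mem_erase.mpr ⟨hbne, hb⟩) (by
      rw [Finset.not_nonempty_iff_eq_empty] at hE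
      simp [hE])

lemma witnesses_aux : ∀ n : ℕ, ∀ P : Finset Pt, P.card = n →
    ∃ W : Finset Pt, W.card ≤ n - 1 ∧
      ∀ a ∈ P, ∀ b ∈ P, a ≠ b → ¬ gabrielEdge (W : Set Pt) a b := by
  classical
  intro n
  induction n with
  | zero =>
    intro P h
    refine ⟨∅, by simp, ?_⟩
    intro a ha
    rw [Finset.card_eq_zero.mp h] at ha
    simp at ha
  | succ n ih =>
    intro P hcard
    rcases Nat.eq_zero_or_pos n with h0 | hpos
    · subst h0
      obtain ⟨x, hx⟩ := Finset.card_eq_one.mp hcard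
      refine ⟨∅, by simp, ?_⟩
      intro a ha b hb hab
      rw [hx] at ha hb
      simp at ha hb
      exact absurd (ha.trans hb.symm) hab
    · have hP : P.Nonempty := Finset.card_pos.mp (by omega)
      obtain ⟨p, hp, w, hw⟩ := exists_extreme_witness P hP
      obtain ⟨W', hW'card, hW'⟩ := ih (P.erase p)
        (by rw [Finset.card_erase_of_mem hp, hcard]; omega)
      refine ⟨insert w W', ?_, ?_⟩
      · calc (insert w W').card ≤ W'.card + 1 := Finset.card_insert_le _ _
          _ ≤ (n + 1) - 1 := by omega
      · intro a ha b hb hab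
        have hsub : (W' : Set Pt) ⊆ ((insert w W' : Finset Pt) : Set Pt) :=
          Finset.coe_subset.mpr (Finset.subset_insert _ _)
        have hwmem : w ∈ ((insert w W' : Finset Pt) : Set Pt) := by simp
        by_cases hap : a = p
        · subst hap
          obtain ⟨hm, hne1, hne2⟩ := hw b hb (by simpa [eq_comm] using hab.symm)
          exact notEdge_of_witness hwmem hm hne1 hne2
        · by_cases hbp : b = p
          · subst hbp
            obtain ⟨hm, hne1, hne2⟩ := hw a ha hap
            have := notEdge_of_witness hwmem hm hne1 hne2
            exact fun he => this (gabrielEdge_comm.mp he)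
          · exact notEdge_mono hsub
              (hW' a (Finset.mem_erase.mpr ⟨hap, ha⟩) b (Finset.mem_erase.mpr ⟨hbp, hb⟩) hab)

/-- `n − 1` witnesses always suffice to eliminate all edges. -/
theorem witnesses_eliminate_all_edges_upper_bound
    (P : Finset Pt) (n : ℕ) (hcard : P.card = n) (hn : 1 ≤ n) :
    ∃ W : Finset Pt, W.card ≤ n - 1 ∧
      ∀ a ∈ P, ∀ b ∈ P, a ≠ b → ¬ gabrielEdge (W : Set Pt) a b := by
  exact witnesses_aux n P hcard
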